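/- Let k ≥ 2, 1 ≤ i ≤ k−1, and let p be a permutation of length n that avoids every pattern in M_{k,i+1,i+1}. Say a position x of p 'acts as the m-th term' (1 ≤ m ≤ k) if there is a strictly increasing sequence of positions x_1 < x_2 < ⋯ < x_k with x_m = x such that p(x_1) < p(x_2) < ⋯ < p(x_k). Let B be the set of positions that act as the (i+1)-st term of such an increasing subsequence of length k, and let A be the set of positions not in B that act as the i-th term. Then for each b ∈ B there is at most one a ∈ A such that some increasing subsequence of length k in p has a as its i-th term and b as its (i+1)-st term. -/

import Mathlib

/-- A permutation `p` of length `n` contains the pattern `q` of length `m` if some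
strictly increasing choice of positions realizes the same relative order. -/
def Contains {n m : ℕ} (p : Equiv.Perm (Fin n)) (q : Equiv.Perm (Fin m)) : Prop :=
  ∃ f : Fin m → Fin n, StrictMono f ∧ ∀ a b : Fin m, q a < q b ↔ p (f a) < p (f b)

/-- The set of permutations of length `n` avoiding every member of `Q`. -/
def Av (n : ℕ) (Q : Set (Σ m, Equiv.Perm (Fin m))) : Set (Equiv.Perm (Fin n)) :=
  {p | ∀ q ∈ Q, ¬ Contains p q.2}

/-- `sigmaP k j v` (for `1 ≤ j, v ≤ k+1`): the permutation of length `k+1` whose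
`j`-th entry (1-indexed) is `v`, and whose remaining `k` entries, read left to right,
are the values of `{1,…,k+1} \ {v}` in increasing order. -/
def sigmaP (k j v : ℕ) : Equiv.Perm (Fin (k+1)) :=
  (finSuccEquiv' ⟨(j-1) % (k+1), Nat.mod_lt _ (Nat.succ_pos k)⟩).trans
    (finSuccEquiv' ⟨(v-1) % (k+1), Nat.mod_lt _ (Nat.succ_pos k)⟩).symm

/-- The almost distant monotone pattern `M_{k,j,i}`: the `k` permutations
`σ_{k,j,v}` for `1 ≤ v ≤ k+1`, `v ≠ i`. -/
def MSet (k j i : ℕ) : Set (Σ m, Equiv.Perm (Fin m)) :=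
  {q | ∃ v, 1 ≤ v ∧ v ≤ k + 1 ∧ v ≠ i ∧ q = ⟨k + 1, sigmaP k j v⟩}

/-- Position `x` of `p` acts as the `m`-th term (1-indexed) of an increasing
subsequence of length `k` in `p`. -/
def ActsAs {n : ℕ} (p : Equiv.Perm (Fin n)) (k m : ℕ) (x : Fin n) : Prop :=
  ∃ g : Fin k → Fin n, StrictMono g ∧ StrictMono (fun t => p (g t)) ∧
    ∃ hm : m - 1 < k, g ⟨m - 1, hm⟩ = x

/-- Positions `a` and `b` act as the `m`-th and `(m+1)`-st terms (1-indexed) of a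
common increasing subsequence of length `k` in `p`. -/
def ActsAsPair {n : ℕ} (p : Equiv.Perm (Fin n)) (k m : ℕ) (a b : Fin n) : Prop :=
  ∃ g : Fin k → Fin n, StrictMono g ∧ StrictMono (fun t => p (g t)) ∧
    ∃ (hm : m - 1 < k) (hm' : m < k), g ⟨m - 1, hm⟩ = a ∧ g ⟨m, hm'⟩ = b

lemma insert_key {n k : ℕ} (p : Equiv.Perm (Fin n)) (f : Fin (k+1) → Fin n)
    (hf : StrictMono f) (i : Fin (k+1))
    (hu : StrictMono (fun t : Fin k => p (f (i.succAbove t)))) :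
    ∃ v0 : Fin (k+1),
      (∀ t : Fin k, t.castSucc < v0 ↔ p (f (i.succAbove t)) < p (f i)) ∧
      Contains p (((finSuccEquiv' i).trans (finSuccEquiv' v0).symm : Equiv.Perm (Fin (k+1)))) := by
  have hne : ∀ t : Fin k, p (f (i.succAbove t)) ≠ p (f i) := by
    intro t h
    exact Fin.succAbove_ne i t (hf.injective (p.injective h))
  set u : Fin k → Fin n := fun t => p (f (i.succAbove t)) with hudef
  set c : Fin n := p (f i) with hcdef
  set S : Finset (Fin k) := Finset.univ.filter (fun t => u t < c) with hSdef
  have hScard : S.card ≤ k := le_trans (Finset.card_filter_le _ _) (by simp)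
  set v0 : Fin (k+1) := ⟨S.card, Nat.lt_succ_of_le hScard⟩ with hv0def
  have keyv : ∀ t : Fin k, t.castSucc < v0 ↔ u t < c := by
    intro t
    constructor
    · intro h
      have ht : (t : ℕ) < S.card := h
      by_contra hc
      have hsub : S ⊆ Finset.Iio t := by
        intro s hs
        have h1 : u s < c := by simpa [hSdef] using hs
        have h2 : u s < u t := lt_of_lt_of_le h1 (le_of_not_gt hc)
        exact Finset.mem_Iio.2 (hu.lt_iff_lt.1 h2)
      have := Finset.card_le_card hsub
      rw [Fin.card_Iio] at this
      omega
    · intro h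
      have hsub : Finset.Iic t ⊆ S := by
        intro s hs
        simp only [hSdef, Finset.mem_filter, Finset.mem_univ, true_and]
        exact lt_of_le_of_lt (hu.monotone (Finset.mem_Iic.1 hs)) h
      have := Finset.card_le_card hsub
      rw [Fin.card_Iic] at this
      exact Fin.mk_lt_mk.mpr (by omega)
  refine ⟨v0, keyv, f, hf, ?_⟩
  have hqi : ((finSuccEquiv' i).trans (finSuccEquiv' v0).symm) i = v0 := by
    simp [finSuccEquiv'_at, finSuccEquiv'_symm_none]
  have hqs : ∀ t : Fin k,
      ((finSuccEquiv' i).trans (finSuccEquiv' v0).symm) (i.succAbove t) = v0.succAbove t := by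
    intro t; simp [finSuccEquiv'_succAbove, finSuccEquiv'_symm_some]
  intro a b
  rcases eq_or_ne a i with ha | ha
  · rcases eq_or_ne b i with hb | hb
    · rw [ha, hb]; simp
    · obtain ⟨t, rfl⟩ := Fin.exists_succAbove_eq hb
      rw [ha, hqi, hqs]
      show v0 < v0.succAbove t ↔ c < u t
      have h1 : v0 < v0.succAbove t ↔ ¬ (v0.succAbove t < v0) :=
        ⟨fun h h' => absurd (h.trans h') (lt_irrefl _),
         fun h => ((Fin.succAbove_ne v0 t).lt_or_gt).resolve_left h⟩
      have h2 : c < u t ↔ ¬ (u t < c) :=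
        ⟨fun h h' => absurd (h.trans h') (lt_irrefl _),
         fun h => ((hne t).lt_or_gt).resolve_left h⟩
      rw [h1, h2, Fin.succAbove_lt_iff_castSucc_lt, keyv]
  · obtain ⟨s, rfl⟩ := Fin.exists_succAbove_eq ha
    rcases eq_or_ne b i with hb | hb
    · rw [hb, hqi, hqs]
      show v0.succAbove s < v0 ↔ u s < c
      rw [Fin.succAbove_lt_iff_castSucc_lt, keyv]
    · obtain ⟨t, rfl⟩ := Fin.exists_succAbove_eq hb
      rw [hqs, hqs]
      show v0.succAbove s < v0.succAbove t ↔ u s < u t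
      rw [Fin.succAbove_lt_succAbove_iff, hu.lt_iff_lt]

set_option maxHeartbeats 2000000 in
theorem stmt5 (k i n : ℕ) (hk : 2 ≤ k) (hi1 : 1 ≤ i) (hi2 : i ≤ k - 1)
    (p : Equiv.Perm (Fin n)) (hp : p ∈ Av n (MSet k (i + 1) (i + 1)))
    (B A : Set (Fin n))
    (hB : B = {x | ActsAs p k (i + 1) x})
    (hA : A = {x | x ∉ B ∧ ActsAs p k i x}) :
    ∀ b ∈ B, ∀ a ∈ A, ∀ a' ∈ A,
      ActsAsPair p k i a b → ActsAsPair p k i a' b → a = a' := by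
  subst hB hA
  have hik : i < k := by omega
  have key : ∀ b a a' : Fin n, ¬ ActsAs p k (i+1) a' →
      ActsAsPair p k i a b → ActsAsPair p k i a' b → a < a' → False := by
    intro b a a' ha'B hpair hpair' hlt
    obtain ⟨g, hg, hpg, hm, hm', hga, hgb⟩ := hpair
    obtain ⟨g', hg', hpg', hm2, hm2', hga', hgb'⟩ := hpair'
    have him : (i - 1 : ℕ) < i := by omega
    have hab : p a < p b := by
      rw [← hga, ← hgb]; exact hpg (Fin.mk_lt_mk.mpr him)
    have ha'b : p a' < p b := by
      rw [← hga', ← hgb']; exact hpg' (Fin.mk_lt_mk.mpr him)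
    have ha'bpos : a' < b := by
      rw [← hga', ← hgb']; exact hg' (Fin.mk_lt_mk.mpr him)
    have hgle : ∀ s : Fin k, (s : ℕ) < i → g s ≤ a := by
      intro s hs
      rw [← hga]; exact hg.monotone (by simp only [Fin.le_def]; omega)
    have hpgle : ∀ s : Fin k, (s : ℕ) < i → p (g s) ≤ p a := by
      intro s hs
      rw [← hga]; exact hpg.monotone (by simp only [Fin.le_def]; omega)
    have hg'ge : ∀ s : Fin k, i ≤ (s : ℕ) → b ≤ g' s := by
      intro s hs
      rw [← hgb']; exact hg'.monotone (by simp only [Fin.le_def]; omega)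
    have hpg'ge : ∀ s : Fin k, i ≤ (s : ℕ) → p b ≤ p (g' s) := by
      intro s hs
      rw [← hgb']; exact hpg'.monotone (by simp only [Fin.le_def]; omega)
    set f : Fin (k+1) → Fin n := fun t =>
      if h : (t : ℕ) < i then g ⟨t, by omega⟩
      else if h2 : (t : ℕ) = i then a'
      else g' ⟨(t : ℕ) - 1, by have := t.isLt; omega⟩ with hfdef
    set I : Fin (k+1) := ⟨i, by omega⟩ with hIdef
    have hfI : f I = a' := by
      simp [hfdef, hIdef]
    have hflt : ∀ (t : Fin (k+1)) (h : (t:ℕ) < i), f t = g ⟨(t:ℕ), by omega⟩ := by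
      intro t h
      simp only [hfdef]
      rw [dif_pos h]
    have hfgt : ∀ (t : Fin (k+1)) (h : (i:ℕ) < (t:ℕ)),
        f t = g' ⟨(t:ℕ) - 1, by have := t.isLt; omega⟩ := by
      intro t h
      simp only [hfdef]
      rw [dif_neg (by omega), dif_neg (by omega)]
    have hfmono : StrictMono f := by
      intro s t hst
      have hst' : (s : ℕ) < (t : ℕ) := hst
      have hsk := s.isLt
      have htk := t.isLt
      rcases lt_trichotomy ((s:ℕ)) i with hs | hs | hs
      · rw [hflt s hs]
        rcases lt_trichotomy ((t:ℕ)) i with ht | ht | ht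
        · rw [hflt t ht]; exact hg (Fin.mk_lt_mk.mpr hst')
        · have : t = I := Fin.ext ht
          rw [this, hfI]
          exact lt_of_le_of_lt (hgle _ hs) hlt
        · rw [hfgt t ht]
          exact lt_of_le_of_lt (hgle _ hs)
            (hlt.trans (ha'bpos.trans_le (hg'ge ⟨(t:ℕ)-1, by have := t.isLt; omega⟩ (show i ≤ (t:ℕ)-1 by omega))))
      · have : s = I := Fin.ext hs
        have ht : (i:ℕ) < (t:ℕ) := by omega
        rw [this, hfI, hfgt t ht]
        exact ha'bpos.trans_le (hg'ge ⟨(t:ℕ)-1, by have := t.isLt; omega⟩ (show i ≤ (t:ℕ)-1 by omega))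
      · have ht : (i:ℕ) < (t:ℕ) := by omega
        rw [hfgt s hs, hfgt t ht]
        exact hg' (Fin.mk_lt_mk.mpr (by omega))
    have hfsA : ∀ t : Fin k, (t:ℕ) < i → f (I.succAbove t) = g t := by
      intro t ht
      rw [Fin.succAbove_of_castSucc_lt I t (by simp only [Fin.lt_def, Fin.coe_castSucc]; exact ht)]
      rw [hflt t.castSucc (by simpa using ht)]
      exact congrArg g (Fin.ext (by simp))
    have hfsB : ∀ t : Fin k, i ≤ (t:ℕ) → f (I.succAbove t) = g' t := by
      intro t ht
      rw [Fin.succAbove_of_le_castSucc I t (by simp only [Fin.le_def, Fin.coe_castSucc]; exact ht)]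
      rw [hfgt t.succ (by simp only [Fin.val_succ]; omega)]
      exact congrArg g' (Fin.ext (by simp))
    have umono : StrictMono (fun t : Fin k => p (f (I.succAbove t))) := by
      intro s t hst
      have hst' : (s:ℕ) < (t:ℕ) := hst
      show p (f (I.succAbove s)) < p (f (I.succAbove t))
      by_cases hs : (s:ℕ) < i
      · rw [hfsA s hs]
        by_cases ht : (t:ℕ) < i
        · rw [hfsA t ht]; exact hpg hst
        · rw [hfsB t (by omega)]
          exact lt_of_le_of_lt (hpgle s hs) (hab.trans_le (hpg'ge t (by omega)))
      · rw [hfsB s (by omega), hfsB t (by omega)]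
        exact hpg' hst
    have hpane : p a ≠ p a' := fun h => absurd (p.injective h) (ne_of_lt hlt)
    rcases hpane.lt_or_gt with hcase | hcase
    · -- p a < p a' : a' acts as (i+1)-st term
      apply ha'B
      have hpffull : StrictMono (fun t : Fin (k+1) => p (f t)) := by
        intro s t hst
        have hst' : (s : ℕ) < (t : ℕ) := hst
        have hsk := s.isLt
        have htk := t.isLt
        show p (f s) < p (f t)
        rcases lt_trichotomy ((s:ℕ)) i with hs | hs | hs
        · rw [hflt s hs]
          rcases lt_trichotomy ((t:ℕ)) i with ht | ht | ht
          · rw [hflt t ht]; exact hpg (Fin.mk_lt_mk.mpr hst')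
          · have : t = I := Fin.ext ht
            rw [this, hfI]
            exact lt_of_le_of_lt (hpgle _ hs) hcase
          · rw [hfgt t ht]
            exact lt_of_le_of_lt (hpgle _ hs)
              (hab.trans_le (hpg'ge ⟨(t:ℕ)-1, by have := t.isLt; omega⟩ (show i ≤ (t:ℕ)-1 by omega)))
        · have : s = I := Fin.ext hs
          have ht : (i:ℕ) < (t:ℕ) := by omega
          rw [this, hfI, hfgt t ht]
          exact ha'b.trans_le (hpg'ge ⟨(t:ℕ)-1, by have := t.isLt; omega⟩ (show i ≤ (t:ℕ)-1 by omega))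
        · have ht : (i:ℕ) < (t:ℕ) := by omega
          rw [hfgt s hs, hfgt t ht]
          exact hpg' (Fin.mk_lt_mk.mpr (by omega))
      refine ⟨fun t => f t.castSucc,
        fun s t h => hfmono (Fin.strictMono_castSucc h),
        fun s t h => hpffull (Fin.strictMono_castSucc h),
        by omega, ?_⟩
      show f (Fin.castSucc ⟨i + 1 - 1, by omega⟩) = a'
      have : (Fin.castSucc (⟨i + 1 - 1, by omega⟩ : Fin k)) = I := Fin.ext (by simp [hIdef])
      rw [this, hfI]
    · -- p a' < p a : forbidden pattern
      obtain ⟨v0, hv0, hcont⟩ := insert_key p f hfmono I umono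
      have hv0le : (v0 : ℕ) ≤ i - 1 := by
        by_contra hcon
        have hti : ((⟨i-1, hm⟩ : Fin k).castSucc) < v0 := by
          simp only [Fin.lt_def, Fin.coe_castSucc]; omega
        have h1 := (hv0 _).1 hti
        rw [hfsA ⟨i-1, hm⟩ him, hfI, hga] at h1
        exact absurd (h1.trans hcase) (lt_irrefl _)
      have e1 : (⟨(i+1-1) % (k+1), Nat.mod_lt _ (Nat.succ_pos k)⟩ : Fin (k+1)) = I := by
        apply Fin.ext
        show (i+1-1) % (k+1) = i
        rw [Nat.add_sub_cancel, Nat.mod_eq_of_lt (by omega)]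
      have e2 : (⟨((v0:ℕ)+1-1) % (k+1), Nat.mod_lt _ (Nat.succ_pos k)⟩ : Fin (k+1)) = v0 := by
        apply Fin.ext
        show ((v0:ℕ)+1-1) % (k+1) = (v0:ℕ)
        rw [Nat.add_sub_cancel, Nat.mod_eq_of_lt v0.isLt]
      have hv : sigmaP k (i+1) ((v0:ℕ)+1)
          = ((finSuccEquiv' I).trans (finSuccEquiv' v0).symm) := by
        unfold sigmaP
        rw [e1, e2]
      refine hp ⟨k+1, sigmaP k (i+1) ((v0:ℕ)+1)⟩
        ⟨(v0:ℕ)+1, by omega, by have := v0.isLt; omega, by omega, rfl⟩ ?_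
      show Contains p (sigmaP k (i+1) ((v0:ℕ)+1))
      rw [hv]
      exact hcont
  intro b hb a ha a' ha' h1 h2
  by_contra hne
  rcases lt_or_gt_of_ne hne with h | h
  · exact key b a a' ha'.1 h1 h2 h
  · exact key b a' a ha.1 h2 h1 h
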